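/- Let h be an additive, J-Lipschitz segment functional on a curve γ : ℝ → M as above. Then every mixed asymptote is a convex combination of a terminal and an initial asymptote: A_tot(γ) ⊆ {τ·v₊ + (1−τ)·v₋ : τ ∈ [0,1], v₊ ∈ A⁺(γ), v₋ ∈ A⁻(γ)}, and moreover A⁺(γ) ∪ A⁻(γ) ⊆ A_tot(γ). -/

import Mathlib

open Filter

/-- Terminal asymptotes (with start point `0`) of an additive segment functional. -/
def Aplus {V : Type*} [NormedAddCommGroup V] [NormedSpace ℝ V]
    (h : ℝ → ℝ → V) : Set V :=
  {v : V | ∃ t : ℕ → ℝ, Tendsto t atTop atTop ∧ (∀ i, 0 < t i) ∧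
    Tendsto (fun i => (t i)⁻¹ • h 0 (t i)) atTop (nhds v)}

/-- Initial asymptotes (with start point `0`) of an additive segment functional. -/
def Aminus {V : Type*} [NormedAddCommGroup V] [NormedSpace ℝ V]
    (h : ℝ → ℝ → V) : Set V :=
  {v : V | ∃ s : ℕ → ℝ, Tendsto s atTop atBot ∧ (∀ i, s i < 0) ∧
    Tendsto (fun i => (0 - s i)⁻¹ • h (s i) 0) atTop (nhds v)}

/-- Mixed asymptotes of an additive segment functional. -/
def Atot {V : Type*} [NormedAddCommGroup V] [NormedSpace ℝ V]
    (h : ℝ → ℝ → V) : Set V :=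
  {v : V | ∃ s t : ℕ → ℝ, Tendsto s atTop atBot ∧ Tendsto t atTop atTop ∧
    (∀ i, s i < t i) ∧
    Tendsto (fun i => (t i - s i)⁻¹ • h (s i) (t i)) atTop (nhds v)}


/-- Decomposition of the mixed average into a convex combination. -/
lemma segDecomp {V : Type*} [NormedAddCommGroup V] [NormedSpace ℝ V]
    (h : ℝ → ℝ → V)
    (hadd : ∀ a b c : ℝ, a ≤ b → b ≤ c → h a c = h a b + h b c)
    {s t : ℝ} (hs : s < 0) (ht : 0 < t) :
    (t - s)⁻¹ • h s t =
      (t / (t - s)) • (t⁻¹ • h 0 t) + (1 - t / (t - s)) • ((0 - s)⁻¹ • h s 0) := by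
  have hts : t - s ≠ 0 := ne_of_gt (by linarith)
  have ht' : t ≠ 0 := ne_of_gt ht
  have hs' : (0:ℝ) - s ≠ 0 := ne_of_gt (by linarith)
  have e1 : t / (t - s) * t⁻¹ = (t - s)⁻¹ := by field_simp
  have e0 : 1 - t / (t - s) = (0 - s) / (t - s) := by field_simp; ring
  have e2 : (1 - t / (t - s)) * (0 - s)⁻¹ = (t - s)⁻¹ := by
    rw [e0, div_mul_eq_mul_div, mul_inv_cancel₀ hs', one_div]
  rw [hadd s 0 t hs.le ht.le, smul_add, smul_smul, smul_smul, e1, e2]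
  abel

/-- A sequence with scalars tending to zero and bounded vectors tends to zero. -/
lemma smul_tendsto_zero {V : Type*} [NormedAddCommGroup V] [NormedSpace ℝ V]
    {r : ℕ → ℝ} {w : ℕ → V} {J : ℝ}
    (hr : Tendsto r atTop (nhds 0)) (hw : ∀ i, ‖w i‖ ≤ J) :
    Tendsto (fun i => r i • w i) atTop (nhds 0) := by
  have hJ : 0 ≤ J := le_trans (norm_nonneg (w 0)) (hw 0)
  have hg : Tendsto (fun i => |r i| * J) atTop (nhds 0) := by
    simpa using (hr.abs.mul_const J)
  refine squeeze_zero_norm (fun i => ?_) hg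
  rw [norm_smul, Real.norm_eq_abs]
  exact mul_le_mul_of_nonneg_left (hw i) (abs_nonneg _)


/-- Every mixed asymptote is a convex combination of a terminal and an initial
asymptote, and the terminal and initial asymptotes are mixed asymptotes. -/
theorem Atot_subset_convexJoin {V : Type*} [NormedAddCommGroup V]
    [NormedSpace ℝ V] [FiniteDimensional ℝ V]
    (h : ℝ → ℝ → V) (J : ℝ)
    (hadd : ∀ a b c : ℝ, a ≤ b → b ≤ c → h a c = h a b + h b c)
    (hbound : ∀ a b : ℝ, a ≤ b → ‖h a b‖ ≤ J * (b - a)) :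
    Atot h ⊆ {x : V | ∃ τ ∈ Set.Icc (0 : ℝ) 1, ∃ vp ∈ Aplus h, ∃ vm ∈ Aminus h,
        x = τ • vp + (1 - τ) • vm} ∧
    Aplus h ∪ Aminus h ⊆ Atot h := by
  -- uniform bounds on the averaged functionals
  have hpJ : ∀ t : ℝ, 0 < t → ‖t⁻¹ • h 0 t‖ ≤ J := by
    intro t ht
    have hb := hbound 0 t ht.le
    rw [norm_smul, Real.norm_eq_abs, abs_of_pos (inv_pos.2 ht)]
    calc t⁻¹ * ‖h 0 t‖ ≤ t⁻¹ * (J * (t - 0)) :=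
          mul_le_mul_of_nonneg_left hb (inv_nonneg.2 ht.le)
      _ = J := by field_simp; ring
  have hmJ : ∀ s : ℝ, s < 0 → ‖(0 - s)⁻¹ • h s 0‖ ≤ J := by
    intro s hs
    have hb := hbound s 0 hs.le
    have hpos : (0:ℝ) < 0 - s := by linarith
    have hne : (0:ℝ) - s ≠ 0 := ne_of_gt hpos
    rw [norm_smul, Real.norm_eq_abs, abs_of_pos (inv_pos.2 hpos)]
    calc (0 - s)⁻¹ * ‖h s 0‖ ≤ (0 - s)⁻¹ * (J * (0 - s)) :=
          mul_le_mul_of_nonneg_left hb (inv_nonneg.2 hpos.le)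
      _ = J := by rw [mul_comm J, ← mul_assoc, inv_mul_cancel₀ hne, one_mul]
  constructor
  · -- mixed asymptotes are convex combinations
    rintro v ⟨s, t, hs, ht, hst, hlim⟩
    obtain ⟨N, hN⟩ := eventually_atTop.1
      ((hs.eventually (eventually_lt_atBot (0:ℝ))).and
        (ht.eventually (eventually_gt_atTop (0:ℝ))))
    set S : ℕ → ℝ := fun i => s (i + N) with hSdef
    set T : ℕ → ℝ := fun i => t (i + N) with hTdef
    have hSneg : ∀ i, S i < 0 := fun i => (hN (i + N) (Nat.le_add_left N i)).1
    have hTpos : ∀ i, 0 < T i := fun i => (hN (i + N) (Nat.le_add_left N i)).2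
    have hS : Tendsto S atTop atBot := hs.comp (tendsto_add_atTop_nat N)
    have hT : Tendsto T atTop atTop := ht.comp (tendsto_add_atTop_nat N)
    have hlim' : Tendsto (fun i => (T i - S i)⁻¹ • h (S i) (T i)) atTop (nhds v) :=
      hlim.comp (tendsto_add_atTop_nat N)
    set p : ℕ → V := fun i => (T i)⁻¹ • h 0 (T i) with hpdef
    set m : ℕ → V := fun i => (0 - S i)⁻¹ • h (S i) 0 with hmdef
    set τf : ℕ → ℝ := fun i => T i / (T i - S i) with hτdef
    have hτmem : ∀ i, τf i ∈ Set.Icc (0:ℝ) 1 := by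
      intro i
      have h1 : (0:ℝ) < T i - S i := by have := hSneg i; have := hTpos i; linarith
      constructor
      · exact div_nonneg (hTpos i).le h1.le
      · rw [div_le_one h1]; have := hSneg i; linarith
    have hpmem : ∀ i, p i ∈ Metric.closedBall (0:V) J := by
      intro i; rw [Metric.mem_closedBall, dist_zero_right]; exact hpJ _ (hTpos i)
    have hmmem : ∀ i, m i ∈ Metric.closedBall (0:V) J := by
      intro i; rw [Metric.mem_closedBall, dist_zero_right]; exact hmJ _ (hSneg i)
    obtain ⟨τ, hτI, φ1, hφ1, hτlim⟩ := isCompact_Icc.tendsto_subseq hτmem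
    obtain ⟨vp, _, φ2, hφ2, hplim⟩ :=
      (isCompact_closedBall (0:V) J).tendsto_subseq (fun i => hpmem (φ1 i))
    obtain ⟨vm, _, φ3, hφ3, hmlim⟩ :=
      (isCompact_closedBall (0:V) J).tendsto_subseq (fun i => hmmem (φ1 (φ2 i)))
    set ψ : ℕ → ℕ := fun i => φ1 (φ2 (φ3 i)) with hψdef
    have hψ : Tendsto ψ atTop atTop :=
      hφ1.tendsto_atTop.comp (hφ2.tendsto_atTop.comp hφ3.tendsto_atTop)
    have τlim : Tendsto (fun i => τf (ψ i)) atTop (nhds τ) :=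
      hτlim.comp (hφ2.tendsto_atTop.comp hφ3.tendsto_atTop)
    have plim : Tendsto (fun i => p (ψ i)) atTop (nhds vp) :=
      hplim.comp hφ3.tendsto_atTop
    have mlim : Tendsto (fun i => m (ψ i)) atTop (nhds vm) := hmlim
    refine ⟨τ, hτI, vp, ⟨fun i => T (ψ i), hT.comp hψ, fun i => hTpos _, plim⟩,
      vm, ⟨fun i => S (ψ i), hS.comp hψ, fun i => hSneg _, mlim⟩, ?_⟩
    have key : Tendsto (fun i => (T (ψ i) - S (ψ i))⁻¹ • h (S (ψ i)) (T (ψ i)))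
        atTop (nhds v) := hlim'.comp hψ
    have key2 : Tendsto (fun i => τf (ψ i) • p (ψ i) + (1 - τf (ψ i)) • m (ψ i))
        atTop (nhds (τ • vp + (1 - τ) • vm)) :=
      (τlim.smul plim).add
        (((tendsto_const_nhds : Tendsto (fun _ : ℕ => (1:ℝ)) atTop (nhds 1)).sub τlim).smul mlim)
    have eqfun : (fun i => (T (ψ i) - S (ψ i))⁻¹ • h (S (ψ i)) (T (ψ i))) =
        fun i => τf (ψ i) • p (ψ i) + (1 - τf (ψ i)) • m (ψ i) := by
      funext i
      exact segDecomp h hadd (hSneg (ψ i)) (hTpos (ψ i))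
    rw [eqfun] at key
    exact tendsto_nhds_unique key key2
  · -- terminal and initial asymptotes are mixed asymptotes
    rintro v (⟨t, ht, htpos, hlim⟩ | ⟨s, hs, hsneg, hlim⟩)
    · -- Aplus case
      have H : ∀ i : ℕ, ∃ N, ∀ k ≥ N, ((i:ℝ) + 1) ^ 2 ≤ t k := fun i =>
        eventually_atTop.1 (ht.eventually (eventually_ge_atTop _))
      choose Nf hNf using H
      set n : ℕ → ℕ := fun i => max i (Nf i) with hndef
      have hn : Tendsto n atTop atTop :=
        tendsto_atTop_mono (fun i => le_max_left _ _) tendsto_id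
      set T : ℕ → ℝ := fun i => t (n i) with hTdef
      set S : ℕ → ℝ := fun i => -((i:ℝ) + 1) with hSdef
      have hTbig : ∀ i : ℕ, ((i:ℝ) + 1) ^ 2 ≤ T i :=
        fun i => hNf i (n i) (le_max_right _ _)
      have hTpos : ∀ i, 0 < T i := fun i => htpos _
      have hSneg : ∀ i, S i < 0 := by
        intro i
        show -((i:ℝ) + 1) < 0
        have : (0:ℝ) < (i:ℝ) + 1 := by positivity
        linarith
      have hS : Tendsto S atTop atBot := by
        apply tendsto_neg_atTop_atBot.comp
        exact tendsto_atTop_add_const_right _ 1 tendsto_natCast_atTop_atTop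
      have hT : Tendsto T atTop atTop := ht.comp hn
      refine ⟨S, T, hS, hT, fun i => lt_trans (hSneg i) (hTpos i), ?_⟩
      -- the convex coefficient of the initial part tends to 0
      set r : ℕ → ℝ := fun i => 1 - T i / (T i - S i) with hrdef
      have hd : ∀ i, (0:ℝ) < T i - S i := by
        intro i; have := hSneg i; have := hTpos i; linarith
      have hr0 : ∀ i, r i = (0 - S i) / (T i - S i) := by
        intro i
        have h1 : T i - S i ≠ 0 := ne_of_gt (hd i)
        simp only [hrdef]; rw [eq_div_iff h1, sub_mul, div_mul_cancel₀ _ h1]; ring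
      have hrle : ∀ i, r i ≤ ((i:ℝ) + 1)⁻¹ := by
        intro i
        rw [hr0 i]
        have hi1 : (0:ℝ) < (i:ℝ) + 1 := by positivity
        have hSval : S i = -((i:ℝ) + 1) := rfl
        have hnum : 0 - S i = (i:ℝ) + 1 := by rw [hSval]; ring
        have e : ((i:ℝ) + 1) / ((i:ℝ) + 1) ^ 2 = ((i:ℝ) + 1)⁻¹ := by
          field_simp
        have hden : ((i:ℝ) + 1) ^ 2 ≤ T i - S i := by
          have h1 := hTbig i
          rw [hSval]
          linarith
        rw [hnum, ← e]
        exact div_le_div₀ hi1.le le_rfl (by positivity) hden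
      have hrnonneg : ∀ i, 0 ≤ r i := by
        intro i; rw [hr0 i]
        exact div_nonneg (by have := hSneg i; linarith) (hd i).le
      have hrlim : Tendsto r atTop (nhds 0) := by
        refine squeeze_zero hrnonneg hrle ?_
        exact tendsto_inv_atTop_zero.comp
          (tendsto_atTop_add_const_right _ 1 tendsto_natCast_atTop_atTop)
      have hplim : Tendsto (fun i => (T i)⁻¹ • h 0 (T i)) atTop (nhds v) :=
        hlim.comp hn
      have hterm1 : Tendsto (fun i => (1 - r i) • ((T i)⁻¹ • h 0 (T i)))
          atTop (nhds v) := by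
        have := ((tendsto_const_nhds : Tendsto (fun _ : ℕ => (1:ℝ)) atTop (nhds 1)).sub
          hrlim).smul hplim
        simpa using this
      have hterm2 : Tendsto (fun i => r i • ((0 - S i)⁻¹ • h (S i) 0))
          atTop (nhds 0) :=
        smul_tendsto_zero hrlim (fun i => hmJ _ (hSneg i))
      have total := hterm1.add hterm2
      rw [add_zero] at total
      have eqfun : (fun i => (T i - S i)⁻¹ • h (S i) (T i)) =
          fun i => (1 - r i) • ((T i)⁻¹ • h 0 (T i)) + r i • ((0 - S i)⁻¹ • h (S i) 0) := by
        funext i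
        have := segDecomp h hadd (hSneg i) (hTpos i)
        rw [this, hrdef]
        simp only [sub_sub_cancel]
      rw [eqfun]
      exact total
    · -- Aminus case
      have H : ∀ i : ℕ, ∃ N, ∀ k ≥ N, s k ≤ -(((i:ℝ) + 1) ^ 2) := fun i =>
        eventually_atTop.1 (hs.eventually (eventually_le_atBot _))
      choose Nf hNf using H
      set n : ℕ → ℕ := fun i => max i (Nf i) with hndef
      have hn : Tendsto n atTop atTop :=
        tendsto_atTop_mono (fun i => le_max_left _ _) tendsto_id
      set S : ℕ → ℝ := fun i => s (n i) with hSdef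
      set T : ℕ → ℝ := fun i => (i:ℝ) + 1 with hTdef
      have hSbig : ∀ i, S i ≤ -(((i:ℝ) + 1) ^ 2) := fun i => hNf i _ (le_max_right _ _)
      have hSneg : ∀ i, S i < 0 := fun i => hsneg _
      have hTpos : ∀ i, 0 < T i := by intro i; simp only [hTdef]; positivity
      have hT : Tendsto T atTop atTop :=
        tendsto_atTop_add_const_right _ 1 tendsto_natCast_atTop_atTop
      have hS : Tendsto S atTop atBot := hs.comp hn
      refine ⟨S, T, hS, hT, fun i => lt_trans (hSneg i) (hTpos i), ?_⟩
      set r : ℕ → ℝ := fun i => T i / (T i - S i) with hrdef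
      have hd : ∀ i, (0:ℝ) < T i - S i := by
        intro i; have := hSneg i; have := hTpos i; linarith
      have hrle : ∀ i, r i ≤ ((i:ℝ) + 1)⁻¹ := by
        intro i
        have hi1 : (0:ℝ) < (i:ℝ) + 1 := by positivity
        have e : ((i:ℝ) + 1) / ((i:ℝ) + 1) ^ 2 = ((i:ℝ) + 1)⁻¹ := by
          field_simp
        have hTval : T i = (i:ℝ) + 1 := rfl
        show T i / (T i - S i) ≤ ((i:ℝ) + 1)⁻¹
        rw [hTval, ← e]
        refine div_le_div₀ hi1.le le_rfl (by positivity) ?_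
        have h1 := hSbig i
        linarith
      have hrnonneg : ∀ i, 0 ≤ r i := fun i => div_nonneg (hTpos i).le (hd i).le
      have hrlim : Tendsto r atTop (nhds 0) := by
        refine squeeze_zero hrnonneg hrle ?_
        exact tendsto_inv_atTop_zero.comp
          (tendsto_atTop_add_const_right _ 1 tendsto_natCast_atTop_atTop)
      have hmlim : Tendsto (fun i => (0 - S i)⁻¹ • h (S i) 0) atTop (nhds v) :=
        hlim.comp hn
      have hterm1 : Tendsto (fun i => r i • ((T i)⁻¹ • h 0 (T i)))
          atTop (nhds 0) :=
        smul_tendsto_zero hrlim (fun i => hpJ _ (hTpos i))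
      have hterm2 : Tendsto (fun i => (1 - r i) • ((0 - S i)⁻¹ • h (S i) 0))
          atTop (nhds v) := by
        have := ((tendsto_const_nhds : Tendsto (fun _ : ℕ => (1:ℝ)) atTop (nhds 1)).sub
          hrlim).smul hmlim
        simpa using this
      have total := hterm1.add hterm2
      rw [zero_add] at total
      have eqfun : (fun i => (T i - S i)⁻¹ • h (S i) (T i)) =
          fun i => r i • ((T i)⁻¹ • h 0 (T i)) + (1 - r i) • ((0 - S i)⁻¹ • h (S i) 0) := by
        funext i
        exact segDecomp h hadd (hSneg i) (hTpos i)
      rw [eqfun]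
      exact total
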